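/- Let γ_X < 0 and α ≥ 1. Define l_β = |γ_X|^{-1}|γ|^{-β} Beta(|γ_X|^{-1}, β+1) for β ≥ 1, where γ < 0 is fixed. Then with V_α := 1 − ((α+2)/(α+1)) · l_{α+1}² / (l_α · l_{α+2}), one has (V_α^{-1} + α + 1)^{-1} = γ_X. -/

import Mathlib

open Real

/-- Beta function via Gamma: Beta(a,b) = Γ(a)Γ(b)/Γ(a+b). -/
noncomputable def BetaFun (a b : ℝ) : ℝ := Gamma a * Gamma b / Gamma (a + b)

/-- The normalized limiting moments. -/
noncomputable def lMom (γX γ β : ℝ) : ℝ := |γX|⁻¹ * |γ| ^ (-β) * BetaFun |γX|⁻¹ (β + 1)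

theorem stmt_6 (γX γ α : ℝ) (hX : γX < 0) (hγ : γ < 0) (hα : 1 ≤ α) :
    ((1 - ((α + 2) / (α + 1)) *
        (lMom γX γ (α + 1)) ^ 2 / (lMom γX γ α * lMom γX γ (α + 2)))⁻¹ + α + 1)⁻¹
      = γX := by
  have hγX : γX ≠ 0 := ne_of_lt hX
  set c := |γX|⁻¹ with hcdef
  have hc : 0 < c := by
    have : 0 < |γX| := abs_pos.mpr hγX
    positivity
  have hγ0 : (0:ℝ) < |γ| := abs_pos.mpr (ne_of_lt hγ)
  have hpe : (|γ| ^ (-1 + -α))^2 = |γ| ^ (-α) * |γ| ^ (-2 + -α) := by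
    rw [sq, ← rpow_add hγ0, ← rpow_add hγ0]
    congr 1; ring
  have hα1 : (0:ℝ) < α + 1 := by linarith
  have hα2 : (0:ℝ) < α + 2 := by linarith
  have e1 : Gamma (α+1+1) = (α+1) * Gamma (α+1) := Gamma_add_one hα1.ne'
  have e2 : Gamma (α+2+1) = (α+2) * ((α+1) * Gamma (α+1)) := by
    rw [Gamma_add_one hα2.ne', show α+2 = α+1+1 by ring, e1]
  have hca1 : (0:ℝ) < c + (α+1) := by linarith
  have hca2 : (0:ℝ) < c + (α+1+1) := by linarith
  have d1 : Gamma (c+(α+1+1)) = (c+(α+1)) * Gamma (c+(α+1)) := by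
    rw [show c+(α+1+1) = (c+(α+1))+1 by ring, Gamma_add_one hca1.ne']
  have d2 : Gamma (c+(α+2+1)) = (c+(α+1+1)) * ((c+(α+1)) * Gamma (c+(α+1))) := by
    rw [show c+(α+2+1) = (c+(α+1+1))+1 by ring, Gamma_add_one hca2.ne', d1]
  have hGc : 0 < Gamma c := Gamma_pos_of_pos hc
  have hG1 : 0 < Gamma (α+1) := Gamma_pos_of_pos hα1
  have hGd : 0 < Gamma (c+(α+1)) := Gamma_pos_of_pos hca1
  have hp0 : (0:ℝ) < |γ| ^ (-α) := rpow_pos_of_pos hγ0 _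
  have hp1 : (0:ℝ) < |γ| ^ (-(α+1)) := rpow_pos_of_pos hγ0 _
  have hp2 : (0:ℝ) < |γ| ^ (-(α+2)) := rpow_pos_of_pos hγ0 _
  have key : 1 - ((α + 2) / (α + 1)) *
        (lMom γX γ (α + 1)) ^ 2 / (lMom γX γ α * lMom γX γ (α + 2))
      = -(c+(α+1))⁻¹ := by
    simp only [lMom, BetaFun, ← hcdef]
    rw [e1, e2, d1, d2]
    field_simp
    rw [show -(α+1) = -1 + -α by ring, show -(α+2) = -2 + -α by ring]
    rw [hpe]
    ring
  rw [key]
  have hfin : (-(c+(α+1))⁻¹)⁻¹ + α + 1 = -c := by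
    rw [inv_neg, inv_inv]; ring
  rw [hfin]
  rw [inv_neg, hcdef, inv_inv, abs_of_neg hX, neg_neg]
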